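/- Let a, b ∈ (π/m)ℤ with e^{ia} ≠ ±1, e^{i(a+b)} ≠ 1, and e^{i(a-b)} ≠ 1. Then I(a,b) = (1 - e^{i(a+b)m})/(e^{ia} - e^{-ia}) · [ (1+e^{i(a+b)})/(1-e^{i(a+b)}) + (1+e^{i(a-b)})/(1-e^{i(a-b)}) ]. -/

import Mathlib

open Complex Finset

/-- The modular S-matrix of the N=2 superconformal algebra at level `m`. -/
noncomputable def Smat (m : ℕ) (u v : ℝ × ℝ) : ℂ :=
  (2 / (m : ℂ)) * Complex.exp (Real.pi * Complex.I * (((u.1 - u.2) * (v.1 - v.2) / m : ℝ) : ℂ)) *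
    Complex.sin (((Real.pi * (u.1 + u.2) * (v.1 + v.2) / m : ℝ) : ℂ))

/-- The Neveu-Schwarz index set `NS^(m)`:
pairs of half-odd-integers `(j,k)` with `0 < j`, `0 < k`, `j + k < m`. -/
noncomputable def NSfin (m : ℕ) : Finset (ℝ × ℝ) :=
  ((Finset.range m ×ˢ Finset.range m).filter fun p => p.1 + p.2 + 1 < m).image
    fun p => ((p.1 : ℝ) + 1 / 2, (p.2 : ℝ) + 1 / 2)

/-- The Ramond index set `R^(m)`:
integer pairs `(j,k)` with `0 < j`, `0 < j + k < m`, `0 ≤ k < m`. -/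
noncomputable def Rfin (m : ℕ) : Finset (ℝ × ℝ) :=
  ((Finset.range m ×ˢ Finset.range m).filter fun p => 1 ≤ p.1 ∧ p.1 + p.2 < m).image
    fun p => ((p.1 : ℝ), (p.2 : ℝ))

/-- The full index set `A^(m) = NS^(m) ∪ R^(m)`. -/
noncomputable def Afin (m : ℕ) : Finset (ℝ × ℝ) := NSfin m ∪ Rfin m

/-- The conjugation `(j,k)* = (k,j)` if `k ≠ 0`, `(m-j, 0)` if `k = 0`. -/
noncomputable def conjA (m : ℕ) (u : ℝ × ℝ) : ℝ × ℝ :=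
  if u.2 = 0 then ((m : ℝ) - u.1, 0) else (u.2, u.1)

/-- `J(a,b) = ∑ e^{iaj} e^{ibk}` over integer pairs `(j,k)` with
`0 < k < m`, `-k < j < k` and `j + k` odd. -/
noncomputable def Jsum (m : ℕ) (a b : ℂ) : ℂ :=
  ∑ k ∈ Finset.Ioo (0 : ℤ) (m : ℤ),
    ∑ j ∈ (Finset.Ioo (-k) k).filter fun j => Odd (j + k),
      Complex.exp (Complex.I * a * j) * Complex.exp (Complex.I * b * k)

/-- `I(a,b) = J(a,b) + J(a,-b)`. -/
noncomputable def Isum (m : ℕ) (a b : ℂ) : ℂ := Jsum m a b + Jsum m a (-b)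

/-- The fusion coefficient `N_{u,u',u''}` given by the modified Verlinde formula. -/
noncomputable def Nfus (m : ℕ) (u u' u'' : ℝ × ℝ) : ℂ :=
  ∑ v ∈ NSfin m,
    Smat m u v * Smat m u' v * Smat m u'' v / Smat m (1 / 2, 1 / 2) v

/-- The fusion coefficient `N_{u,u'}^{u''}` (with conjugated third entry). -/
noncomputable def Ncof (m : ℕ) (u u' w : ℝ × ℝ) : ℂ :=
  ∑ v ∈ NSfin m,
    Smat m u v * Smat m u' v * (starRingEnd ℂ) (Smat m w v) / Smat m (1 / 2, 1 / 2) v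

/-- Membership in `𝔽^(m)`: an odd number of the three indices is of Neveu-Schwarz type. -/
def Fmem (m : ℕ) (u u' u'' : ℝ × ℝ) : Prop :=
  (u ∈ NSfin m ∧ u' ∈ NSfin m ∧ u'' ∈ NSfin m) ∨
  (u ∈ NSfin m ∧ u' ∈ Rfin m ∧ u'' ∈ Rfin m) ∨
  (u ∈ Rfin m ∧ u' ∈ NSfin m ∧ u'' ∈ Rfin m) ∨
  (u ∈ Rfin m ∧ u' ∈ Rfin m ∧ u'' ∈ NSfin m)


private lemma filter_odd_eq (k : ℤ) (hk : 0 < k) :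
    ((Finset.Ioo (-k) k).filter fun j => Odd (j + k)) =
      (Finset.range k.toNat).map ⟨fun t : ℕ => 2 * (t : ℤ) - k + 1, by intro x y h; simp only [] at h; omega⟩ := by
  ext j
  simp only [Finset.mem_filter, Finset.mem_Ioo, Finset.mem_map, Finset.mem_range,
    Function.Embedding.coeFn_mk, Int.odd_iff]
  dsimp only [DFunLike.coe]
  constructor
  · rintro ⟨⟨h1, h2⟩, h3⟩
    exact ⟨((j + k - 1) / 2).toNat, by omega, by omega⟩
  · rintro ⟨t, ht, rfl⟩
    omega

private lemma Ioo_int_eq (m : ℕ) :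
    Finset.Ioo (0 : ℤ) (m : ℤ) =
      (Finset.range (m - 1)).map ⟨fun t : ℕ => (t : ℤ) + 1, by intro x y h; simp only [] at h; omega⟩ := by
  ext j
  simp only [Finset.mem_Ioo, Finset.mem_map, Finset.mem_range, Function.Embedding.coeFn_mk]
  dsimp only [DFunLike.coe]
  constructor
  · rintro ⟨h1, h2⟩; exact ⟨(j - 1).toNat, by omega, by omega⟩
  · rintro ⟨t, ht, rfl⟩; omega

private lemma Sgeo_eq (x : ℂ) (hx0 : x ≠ 0) (hx1 : x ≠ 1) (m : ℕ) (hm : 0 < m) :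
    ∑ k ∈ Finset.Ioo (0 : ℤ) (m : ℤ), x ^ k = (x - x ^ m) / (1 - x) := by
  rw [Ioo_int_eq, Finset.sum_map]
  dsimp only [DFunLike.coe]
  have h1 : ∀ t ∈ Finset.range (m - 1), x ^ ((t : ℤ) + 1) = x * x ^ t := by
    intro t _
    rw [zpow_add₀ hx0, zpow_natCast, zpow_one]; ring
  rw [Finset.sum_congr rfl h1, ← Finset.mul_sum, geom_sum_eq hx1]
  have hx1' : (1 : ℂ) - x ≠ 0 := sub_ne_zero.2 (Ne.symm hx1)
  have hx1'' : x - 1 ≠ 0 := sub_ne_zero.2 hx1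
  have hxm : x * x ^ (m - 1) = x ^ m := by
    rw [← pow_succ', Nat.sub_add_cancel hm]
  field_simp
  linear_combination (1 - x) * hxm

private lemma inner_geom (w : ℂ) (hw0 : w ≠ 0) (hw2 : w ^ 2 ≠ 1) (k : ℤ) (hk : 0 < k) :
    ∑ t ∈ Finset.range k.toNat, w ^ (2 * (t : ℤ) - k + 1) =
      (w ^ (k + 1) - w ^ (1 - k)) / (w ^ 2 - 1) := by
  have h1 : ∀ t ∈ Finset.range k.toNat, w ^ (2 * (t : ℤ) - k + 1) = w ^ (1 - k) * (w ^ 2) ^ t := by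
    intro t _
    rw [← zpow_natCast (w ^ 2) t, ← zpow_natCast w 2, ← zpow_mul, ← zpow_add₀ hw0]
    ring_nf
  rw [Finset.sum_congr rfl h1, ← Finset.mul_sum, geom_sum_eq hw2]
  have h2 : ((w ^ 2) ^ k.toNat : ℂ) = w ^ (2 * k) := by
    rw [← zpow_natCast (w ^ 2) k.toNat, ← zpow_natCast w 2, ← zpow_mul,
      Int.toNat_of_nonneg hk.le]
    norm_num
  rw [h2]
  have hw2' : w ^ 2 - 1 ≠ 0 := sub_ne_zero.2 hw2
  rw [mul_div_assoc']
  congr 1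
  rw [mul_sub, ← zpow_add₀ hw0, mul_one]
  ring_nf

private lemma Jsum_eq (m : ℕ) (a b : ℂ)
    (hw2 : Complex.exp (Complex.I * a) ^ 2 ≠ 1) :
    Jsum m a b = ∑ k ∈ Finset.Ioo (0 : ℤ) (m : ℤ),
      (Complex.exp (Complex.I * a) * (Complex.exp (Complex.I * a) * Complex.exp (Complex.I * b)) ^ k
        - Complex.exp (Complex.I * a) *
            (Complex.exp (Complex.I * a) * (Complex.exp (Complex.I * b))⁻¹) ^ (-k)) /
        (Complex.exp (Complex.I * a) ^ 2 - 1) := by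
  set w : ℂ := Complex.exp (Complex.I * a) with hw
  set z : ℂ := Complex.exp (Complex.I * b) with hz
  have hw0 : w ≠ 0 := Complex.exp_ne_zero _
  have hz0 : z ≠ 0 := Complex.exp_ne_zero _
  unfold Jsum
  refine Finset.sum_congr rfl fun k hk => ?_
  have hk0 : 0 < k := (Finset.mem_Ioo.1 hk).1
  have hexp : ∀ j : ℤ, Complex.exp (Complex.I * a * j) = w ^ j := by
    intro j
    rw [hw, show Complex.I * a * j = (j : ℂ) * (Complex.I * a) by ring, Complex.exp_int_mul]
  have hexpb : Complex.exp (Complex.I * b * k) = z ^ k := by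
    rw [hz, show Complex.I * b * k = (k : ℂ) * (Complex.I * b) by ring, Complex.exp_int_mul]
  rw [filter_odd_eq k hk0, Finset.sum_map]
  dsimp only [DFunLike.coe]
  have h3 : ∀ t ∈ Finset.range k.toNat,
      Complex.exp (Complex.I * a * ((2 * (t : ℤ) - k + 1 : ℤ) : ℂ)) *
          Complex.exp (Complex.I * b * k)
        = w ^ (2 * (t : ℤ) - k + 1) * z ^ k := fun t _ => by rw [hexp, hexpb]
  rw [Finset.sum_congr rfl h3, ← Finset.sum_mul, inner_geom w hw0 hw2 k hk0]
  have hw2' : w ^ 2 - 1 ≠ 0 := sub_ne_zero.2 hw2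
  rw [div_mul_eq_mul_div]
  congr 1
  rw [sub_mul]
  congr 1
  · rw [mul_zpow, zpow_add₀ hw0, zpow_one]
    ring
  · simp only [mul_zpow, zpow_neg, inv_zpow, inv_inv, mul_inv,
      show (1 : ℤ) - k = 1 + -k from by ring, zpow_add₀ hw0, zpow_one]
    ring

private lemma key_alg (ε u : ℂ) (hu0 : u ≠ 0) (h1u : 1 - u ≠ 0) (h1ui : 1 - u⁻¹ ≠ 0) :
    (u - ε) / (1 - u) - (u⁻¹ - ε) / (1 - u⁻¹) = (1 - ε) * ((1 + u) / (1 - u)) := by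
  have hu1' : u - 1 ≠ 0 := fun h => h1u (by linear_combination -h)
  have step : (u⁻¹ - ε) / (1 - u⁻¹) = (1 - ε * u) / (u - 1) := by
    rw [div_eq_div_iff h1ui hu1']
    linear_combination (1 - ε) * (mul_inv_cancel₀ hu0)
  rw [step, show u - 1 = -(1 - u) by ring, div_neg, sub_neg_eq_add, ← add_div,
    ← mul_div_assoc]
  congr 1
  ring

private lemma final_alg (w u v ε : ℂ) (hw0 : w ≠ 0) (hu0 : u ≠ 0) (hv0 : v ≠ 0)
    (h1u : 1 - u ≠ 0) (h1v : 1 - v ≠ 0) (h1ui : 1 - u⁻¹ ≠ 0) (h1vi : 1 - v⁻¹ ≠ 0)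
    (hw2' : w ^ 2 - 1 ≠ 0) (hwwi : w - w⁻¹ ≠ 0) :
    w * ((u - ε) / (1 - u) - (u⁻¹ - ε) / (1 - u⁻¹) + ((v - ε) / (1 - v)) - (v⁻¹ - ε) / (1 - v⁻¹))
        / (w ^ 2 - 1)
      = (1 - ε) / (w - w⁻¹) * ((1 + u) / (1 - u) + (1 + v) / (1 - v)) := by
  have hww : w - w⁻¹ = (w ^ 2 - 1) / w := by
    rw [eq_div_iff hw0, sub_mul, inv_mul_cancel₀ hw0]
    ring
  have h1 := key_alg ε u hu0 h1u h1ui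
  have h2 := key_alg ε v hv0 h1v h1vi
  rw [show w * ((u - ε) / (1 - u) - (u⁻¹ - ε) / (1 - u⁻¹) + ((v - ε) / (1 - v)) - (v⁻¹ - ε) / (1 - v⁻¹)) = w * (((u - ε) / (1 - u) - (u⁻¹ - ε) / (1 - u⁻¹)) + ((v - ε) / (1 - v) - (v⁻¹ - ε) / (1 - v⁻¹))) by ring, h1, h2, hww, div_div_eq_mul_div]
  ring

theorem Isum_generic (m : ℕ) (hm : 0 < m) (a b : ℝ)
    (haZ : ∃ p : ℤ, a = Real.pi * p / m) (hbZ : ∃ q : ℤ, b = Real.pi * q / m)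
    (ha1 : Complex.exp (Complex.I * a) ≠ 1) (ha2 : Complex.exp (Complex.I * a) ≠ -1)
    (hab : Complex.exp (Complex.I * ((a : ℂ) + b)) ≠ 1)
    (hab' : Complex.exp (Complex.I * ((a : ℂ) - b)) ≠ 1) :
    Isum m a b
      = (1 - Complex.exp (Complex.I * ((a : ℂ) + b) * m)) /
          (Complex.exp (Complex.I * a) - Complex.exp (-(Complex.I * a))) *
        ((1 + Complex.exp (Complex.I * ((a : ℂ) + b))) /
            (1 - Complex.exp (Complex.I * ((a : ℂ) + b))) +
         (1 + Complex.exp (Complex.I * ((a : ℂ) - b))) /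
            (1 - Complex.exp (Complex.I * ((a : ℂ) - b)))) := by
  obtain ⟨p, hp⟩ := haZ
  obtain ⟨q, hq⟩ := hbZ
  have hmR : (m : ℝ) ≠ 0 := Nat.cast_ne_zero.2 hm.ne'
  have hmC : (m : ℂ) ≠ 0 := Nat.cast_ne_zero.2 hm.ne'
  have hamC : (a : ℂ) * m = Real.pi * p := by
    rw [hp]; push_cast; field_simp
  have hbmC : (b : ℂ) * m = Real.pi * q := by
    rw [hq]; push_cast; field_simp
  set w : ℂ := Complex.exp (Complex.I * a) with hw
  set z : ℂ := Complex.exp (Complex.I * b) with hz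
  set u : ℂ := Complex.exp (Complex.I * ((a : ℂ) + b)) with hu
  set v : ℂ := Complex.exp (Complex.I * ((a : ℂ) - b)) with hv
  have hw0 : w ≠ 0 := Complex.exp_ne_zero _
  have hz0 : z ≠ 0 := Complex.exp_ne_zero _
  have hu0 : u ≠ 0 := Complex.exp_ne_zero _
  have hv0 : v ≠ 0 := Complex.exp_ne_zero _
  have huwz : u = w * z := by rw [hu, hw, hz, ← Complex.exp_add]; ring_nf
  have hvwz : v = w * z⁻¹ := by
    rw [hv, hw, hz, ← Complex.exp_neg, ← Complex.exp_add]; ring_nf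
  have hw2 : w ^ 2 ≠ 1 := by
    intro h
    have h' : (w - 1) * (w + 1) = 0 := by linear_combination h
    rcases mul_eq_zero.1 h' with h'' | h''
    · exact ha1 (sub_eq_zero.1 h'')
    · exact ha2 (eq_neg_of_add_eq_zero_left h'')
  have hw2' : w ^ 2 - 1 ≠ 0 := sub_ne_zero.2 hw2
  have hu1 : u ≠ 1 := hab
  have hv1 : v ≠ 1 := hab'
  have hui1 : u⁻¹ ≠ 1 := fun h => hu1 (by rw [← inv_inv u, h, inv_one])
  have hvi1 : v⁻¹ ≠ 1 := fun h => hv1 (by rw [← inv_inv v, h, inv_one])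
  -- roots of unity facts
  set ε : ℂ := Complex.exp (Complex.I * ((a : ℂ) + b) * m) with hε
  have hεval : ε = (-1 : ℂ) ^ (p + q) := by
    rw [hε, show Complex.I * ((a : ℂ) + b) * m = ((p + q : ℤ) : ℂ) * (Real.pi * Complex.I) by
      push_cast; linear_combination Complex.I * hamC + Complex.I * hbmC,
      Complex.exp_int_mul, Complex.exp_pi_mul_I]
  have hum : u ^ m = ε := by
    rw [hu, hε, ← Complex.exp_nat_mul]
    ring_nf
  have hvm : v ^ m = ε := by
    have : v ^ m = Complex.exp (Complex.I * ((a : ℂ) - b) * m) := by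
      rw [hv, ← Complex.exp_nat_mul]; ring_nf
    rw [this, show Complex.I * ((a : ℂ) - b) * m = ((p - q : ℤ) : ℂ) * (Real.pi * Complex.I) by
      push_cast; linear_combination Complex.I * hamC - Complex.I * hbmC,
      Complex.exp_int_mul, Complex.exp_pi_mul_I, hεval]
    have h2q : ((-1 : ℂ)) ^ (2 * q) = 1 := by
      rw [zpow_mul]; norm_num
    rw [show p + q = p - q + 2 * q by ring, zpow_add₀ (by norm_num : (-1 : ℂ) ≠ 0), h2q, mul_one]
  have hε2 : ε ^ 2 = 1 := by
    rw [hεval, ← zpow_natCast, ← zpow_mul]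
    rw [show ((p + q) * (2 : ℕ) : ℤ) = 2 * (p + q) by push_cast; ring, zpow_mul]
    norm_num
  have huim : (u⁻¹) ^ m = ε := by
    rw [inv_pow, hum, inv_eq_of_mul_eq_one_left (by linear_combination hε2)]
  have hvim : (v⁻¹) ^ m = ε := by
    rw [inv_pow, hvm, inv_eq_of_mul_eq_one_left (by linear_combination hε2)]
  -- express Isum via geometric sums
  have hJ1 := Jsum_eq m a b hw2
  have hJ2 := Jsum_eq m a (-b) hw2
  rw [show Complex.exp (Complex.I * (-(b : ℂ))) = z⁻¹ by
    rw [hz, ← Complex.exp_neg]; ring_nf] at hJ2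
  rw [inv_inv] at hJ2
  rw [← hw, ← hz] at hJ1
  rw [← hw] at hJ2
  have hIsum : Isum m a b =
      (w * ((∑ k ∈ Finset.Ioo (0 : ℤ) (m : ℤ), u ^ k)
        - (∑ k ∈ Finset.Ioo (0 : ℤ) (m : ℤ), (u⁻¹) ^ k)
        + (∑ k ∈ Finset.Ioo (0 : ℤ) (m : ℤ), v ^ k)
        - (∑ k ∈ Finset.Ioo (0 : ℤ) (m : ℤ), (v⁻¹) ^ k))) / (w ^ 2 - 1) := by
    rw [Isum, hJ1, hJ2, ← Finset.sum_add_distrib, eq_div_iff hw2', Finset.sum_mul,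
      ← Finset.sum_sub_distrib, ← Finset.sum_add_distrib, ← Finset.sum_sub_distrib,
      Finset.mul_sum]
    refine Finset.sum_congr rfl fun k hk => ?_
    rw [← add_div, div_mul_cancel₀ _ hw2', ← huwz, ← hvwz]
    simp only [zpow_neg, inv_zpow]
    ring
  rw [hIsum, Sgeo_eq u hu0 hu1 m hm, Sgeo_eq u⁻¹ (inv_ne_zero hu0) hui1 m hm,
    Sgeo_eq v hv0 hv1 m hm, Sgeo_eq v⁻¹ (inv_ne_zero hv0) hvi1 m hm,
    hum, hvm, huim, hvim, Complex.exp_neg, ← hw]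
  have h1u : (1 : ℂ) - u ≠ 0 := sub_ne_zero.2 (Ne.symm hu1)
  have h1v : (1 : ℂ) - v ≠ 0 := sub_ne_zero.2 (Ne.symm hv1)
  have h1ui : (1 : ℂ) - u⁻¹ ≠ 0 := sub_ne_zero.2 (Ne.symm hui1)
  have h1vi : (1 : ℂ) - v⁻¹ ≠ 0 := sub_ne_zero.2 (Ne.symm hvi1)
  have hwwi : w - w⁻¹ ≠ 0 := by
    intro h
    apply hw2
    have := sub_eq_zero.1 h
    field_simp at this
    linear_combination this
  clear_value w z u v ε
  exact final_alg w u v ε hw0 hu0 hv0 h1u h1v h1ui h1vi hw2' hwwi
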